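/- arXiv:1512.05966 — 2 statements merged into one kernel-verified Lean document; each statement's English description precedes it below -/
import Mathlib

section
/- Let 𝓕 be the family of all λ-measurable subsets M of 2^ω such that M has density 1 at every point of M. Then 𝓕 is closed under finite intersections, and for every subfamily ℋ ⊆ 𝓕 the union ⋃ℋ is λ-measurable and again belongs to 𝓕 (it has density 1 at each of its points). Consequently 𝓕 is a topology on 2^ω (the density topology), and every set open in this topology is λ-measurable. -/
open MeasureTheory Filter Topology
open scoped ENNReal

/-- The basic cylinder `N_s` determined by a finite binary sequence `s`:
the set of all `β ∈ 2^ω` extending `s`. -/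
def cyl (s : List Bool) : Set (ℕ → Bool) :=
  {β | ∀ i : Fin s.length, β i = s.get i}

/-- The initial segment `β↾l` of `β ∈ 2^ω`, as a finite binary sequence. -/
def seg (β : ℕ → Bool) (l : ℕ) : List Bool := List.ofFn (fun i : Fin l => β i)

/-- A martingale: a `[0,1]`-valued function on finite binary sequences with
`f(s) = (f(s⌢0) + f(s⌢1))/2`. -/
def IsMartingale (f : List Bool → ℝ) : Prop :=
  (∀ s, f s ∈ Set.Icc (0:ℝ) 1) ∧
  ∀ s, f s = (f (s ++ [false]) + f (s ++ [true])) / 2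

/-- The oscillation `osc(f,β) = inf_N sup_{p,q ≥ N} |f(β↾p) − f(β↾q)|`. -/
noncomputable def osc (f : List Bool → ℝ) (β : ℕ → Bool) : ℝ :=
  ⨅ N : ℕ, ⨆ p : {n : ℕ // N ≤ n}, ⨆ q : {n : ℕ // N ≤ n},
    |f (seg β p.1) - f (seg β q.1)|

/-- The set of divergence `D(f) = {β : osc(f,β) > 0}`. -/
def divSet (f : List Bool → ℝ) : Set (ℕ → Bool) := {β | 0 < osc f β}

/-- `M` has density 1 at `β`: `λ(M ∩ N_{β↾l}) / λ(N_{β↾l}) → 1`. -/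
def densityOne (μ : Measure (ℕ → Bool)) (M : Set (ℕ → Bool)) (β : ℕ → Bool) : Prop :=
  Tendsto (fun l : ℕ => μ (M ∩ cyl (seg β l)) / μ (cyl (seg β l))) atTop (𝓝 1)

/-- A set is `Σ⁰₃` iff it is a countable union of `Gδ` sets. -/
def IsSigma03 {X : Type*} [TopologicalSpace X] (S : Set X) : Prop :=
  ∃ g : ℕ → Set X, (∀ n, IsGδ (g n)) ∧ S = ⋃ n, g n

/-- A set is coanalytic (`Π¹₁`) iff its complement is analytic. -/
def IsCoanalytic {X : Type*} [TopologicalSpace X] (S : Set X) : Prop :=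
  MeasureTheory.AnalyticSet Sᶜ

/-- The associated (partial) function of a martingale: `ψ(f)(β) = lim_l f(β↾l)`
(a junk value if the limit does not exist). -/
noncomputable def psi (f : List Bool → ℝ) (β : ℕ → Bool) : ℝ :=
  limUnder atTop (fun l => f (seg β l))

/-- The family of λ-measurable sets having density 1 at each of their points. -/
def densFam (μ : Measure (ℕ → Bool)) : Set (Set (ℕ → Bool)) :=
  {M | NullMeasurableSet M μ ∧ ∀ β ∈ M, densityOne μ M β}

lemma seg_length (β : ℕ → Bool) (l : ℕ) : (seg β l).length = l := by
  simp [seg]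

lemma mem_cyl_iff {s : List Bool} {β : ℕ → Bool} :
    β ∈ cyl s ↔ ∀ i : Fin s.length, β i = s.get i := Iff.rfl

lemma mem_cyl_seg (β : ℕ → Bool) (l : ℕ) : β ∈ cyl (seg β l) := by
  intro i
  change β i = (seg β l)[i.1]
  simp [seg, List.get_ofFn]

lemma seg_prefix (β : ℕ → Bool) {k l : ℕ} (h : k ≤ l) : seg β k <+: seg β l := by
  have : seg β k = (seg β l).take k := by
    apply List.ext_getElem
    · simp [seg, h]
    · intro i h1 h2
      simp [seg, List.getElem_ofFn]
  rw [this]; exact List.take_prefix _ _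

lemma cyl_mono {s t : List Bool} (h : t <+: s) : cyl s ⊆ cyl t := by
  intro β hβ i
  have hl : t.length ≤ s.length := h.length_le
  have := hβ ⟨i, lt_of_lt_of_le i.2 hl⟩
  rw [this]
  obtain ⟨u, rfl⟩ := h
  simp only [List.get_eq_getElem]
  exact List.getElem_append_left i.2

lemma cyl_disjoint {s t : List Bool} (hs : ¬ s <+: t) (ht : ¬ t <+: s) :
    Disjoint (cyl s) (cyl t) := by
  rw [Set.disjoint_left]
  intro β hβs hβt
  rcases le_total s.length t.length with h | h
  · apply hs
    have : s = t.take s.length := by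
      apply List.ext_getElem
      · simp [h]
      · intro i h1 h2
        have h3 : i < t.length := lt_of_lt_of_le h1 h
        have e1 := hβs ⟨i, h1⟩
        have e2 := hβt ⟨i, h3⟩
        simp at e1 e2 ⊢
        rw [← e1, e2]
    rw [this]; exact List.take_prefix _ _
  · apply ht
    have : t = s.take t.length := by
      apply List.ext_getElem
      · simp [h]
      · intro i h1 h2
        have h3 : i < s.length := lt_of_lt_of_le h1 h
        have e1 := hβt ⟨i, h1⟩
        have e2 := hβs ⟨i, h3⟩
        simp at e1 e2 ⊢
        rw [← e1, e2]
    rw [this]; exact List.take_prefix _ _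

lemma cyl_nil : cyl [] = Set.univ := by
  ext β
  simp only [Set.mem_univ, iff_true]
  intro i
  exact absurd i.2 (by simp)

lemma cyl_eq_iInter (s : List Bool) :
    cyl s = ⋂ i : Fin s.length, (fun β : ℕ → Bool => β (i:ℕ)) ⁻¹' {s.get i} := by
  ext; simp [cyl, Set.mem_iInter]

lemma cyl_measurable (s : List Bool) : MeasurableSet (cyl s) := by
  rw [cyl_eq_iInter]
  exact MeasurableSet.iInter fun i => measurable_pi_apply (i:ℕ) (measurableSet_singleton _)

lemma cyl_open (s : List Bool) : IsOpen (cyl s) := by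
  rw [cyl_eq_iInter]
  exact isOpen_iInter_of_finite fun i => (continuous_apply (i:ℕ)).isOpen_preimage _ (isOpen_discrete _)

lemma exists_cyl_subset {O : Set (ℕ → Bool)} (hO : IsOpen O) {β : ℕ → Bool} (hβ : β ∈ O) :
    ∃ l, cyl (seg β l) ⊆ O := by
  obtain ⟨I, u, hu, hsub⟩ := isOpen_pi_iff.1 hO β hβ
  refine ⟨(I.sup id) + 1, fun γ hγ => hsub ?_⟩
  intro i hi
  have hil : i < (I.sup id) + 1 := Nat.lt_succ_of_le (Finset.le_sup (f := id) hi)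
  have hg : γ i = β i := by
    have h1 := hγ ⟨i, by simpa [seg_length] using hil⟩
    simp only [List.get_eq_getElem, seg, List.getElem_ofFn] at h1
    exact h1
  rw [hg]
  exact (hu i hi).2

/-- every member of a set `F` of strings has a prefix in the set of `F`-minimal elements -/
lemma exists_minimal_prefix_aux (F : Set (List Bool)) :
    ∀ (n : ℕ) (s : List Bool), s.length = n → s ∈ F →
      ∃ t ∈ F, t <+: s ∧ ∀ u ∈ F, u <+: t → u = t := by
  intro n
  induction n using Nat.strong_induction_on with
  | _ n ih =>
  intro s hn hs
  by_cases h : ∀ u ∈ F, u <+: s → u = s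
  · exact ⟨s, hs, List.prefix_refl s, h⟩
  · push_neg at h
    obtain ⟨u, huF, hus, hne⟩ := h
    have hlt : u.length < s.length := by
      rcases lt_or_eq_of_le hus.length_le with h' | h'
      · exact h'
      · exact absurd (List.IsPrefix.eq_of_length hus h') hne
    obtain ⟨t, htF, htu, hmin⟩ := ih u.length (hn ▸ hlt) u rfl huF
    exact ⟨t, htF, htu.trans hus, hmin⟩

lemma exists_minimal_prefix (F : Set (List Bool)) (s : List Bool) (hs : s ∈ F) :
    ∃ t ∈ F, t <+: s ∧ ∀ u ∈ F, u <+: t → u = t :=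
  exists_minimal_prefix_aux F s.length s rfl hs

section Meas
variable {μ : Measure (ℕ → Bool)} (hμ : ∀ s : List Bool, μ (cyl s) = (1/2 : ℝ≥0∞) ^ s.length)

include hμ

lemma measure_cyl_ne_zero (s : List Bool) : μ (cyl s) ≠ 0 := by
  rw [hμ]
  exact (ENNReal.pow_pos (by norm_num) _).ne'

lemma measure_cyl_ne_top (s : List Bool) : μ (cyl s) ≠ ⊤ := by
  rw [hμ]
  exact (ENNReal.pow_lt_top (by norm_num)).ne

lemma measure_univ_one : μ Set.univ = 1 := by
  have := hμ []
  rw [cyl_nil] at this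
  simpa using this

lemma ratio_add (M : Set (ℕ → Bool)) (hM : NullMeasurableSet M μ) (s : List Bool) :
    μ (M ∩ cyl s) / μ (cyl s) + μ (cyl s \ M) / μ (cyl s) = 1 := by
  rw [ENNReal.div_add_div_same, Set.inter_comm, measure_inter_add_diff₀ (cyl s) hM,
    ENNReal.div_self (measure_cyl_ne_zero hμ s) (measure_cyl_ne_top hμ s)]

lemma densityOne_iff_compl {M : Set (ℕ → Bool)} (hM : NullMeasurableSet M μ) (β : ℕ → Bool) :
    densityOne μ M β ↔
      Tendsto (fun l : ℕ => μ (cyl (seg β l) \ M) / μ (cyl (seg β l))) atTop (𝓝 0) := by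
  have key : ∀ l : ℕ, μ (M ∩ cyl (seg β l)) / μ (cyl (seg β l))
      + μ (cyl (seg β l) \ M) / μ (cyl (seg β l)) = 1 := fun l => ratio_add hμ M hM _
  have h1 : ∀ l : ℕ, μ (M ∩ cyl (seg β l)) / μ (cyl (seg β l)) ≠ ⊤ := by
    intro l
    exact ne_top_of_le_ne_top ENNReal.one_ne_top (le_trans le_self_add (key l).le)
  have h2 : ∀ l : ℕ, μ (cyl (seg β l) \ M) / μ (cyl (seg β l)) ≠ ⊤ := by
    intro l
    exact ne_top_of_le_ne_top ENNReal.one_ne_top (le_trans le_add_self (key l).le)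
  constructor
  · intro h
    have : (fun l : ℕ => μ (cyl (seg β l) \ M) / μ (cyl (seg β l)))
        = fun l => 1 - μ (M ∩ cyl (seg β l)) / μ (cyl (seg β l)) := by
      funext l
      rw [eq_comm]
      refine ENNReal.sub_eq_of_eq_add (h1 l) ?_
      rw [← key l, add_comm]
    rw [this]
    simpa using ENNReal.Tendsto.sub tendsto_const_nhds h (Or.inl ENNReal.one_ne_top)
  · intro h
    have : (fun l : ℕ => μ (M ∩ cyl (seg β l)) / μ (cyl (seg β l)))
        = fun l => 1 - μ (cyl (seg β l) \ M) / μ (cyl (seg β l)) := by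
      funext l
      rw [eq_comm]
      refine ENNReal.sub_eq_of_eq_add (h2 l) ?_
      rw [← key l, add_comm]
    show Tendsto _ atTop (𝓝 1)
    rw [this]
    simpa using ENNReal.Tendsto.sub tendsto_const_nhds h (Or.inl ENNReal.one_ne_top)

lemma densityOne_mono {M V : Set (ℕ → Bool)} (hM : NullMeasurableSet M μ)
    (hV : NullMeasurableSet V μ) (hMV : μ (M \ V) = 0) {β : ℕ → Bool}
    (h : densityOne μ M β) : densityOne μ V β := by
  rw [densityOne_iff_compl hμ hM] at h
  rw [densityOne_iff_compl hμ hV]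
  refine tendsto_of_tendsto_of_tendsto_of_le_of_le tendsto_const_nhds h
    (fun l => zero_le) (fun l => ?_)
  apply ENNReal.div_le_div_right
  calc μ (cyl (seg β l) \ V) ≤ μ ((cyl (seg β l) \ M) ∪ (M \ V)) := by
        apply measure_mono
        intro x hx
        by_cases hxM : x ∈ M
        · exact Or.inr ⟨hxM, hx.2⟩
        · exact Or.inl ⟨hx.1, hxM⟩
    _ ≤ μ (cyl (seg β l) \ M) + μ (M \ V) := measure_union_le _ _
    _ = μ (cyl (seg β l) \ M) := by rw [hMV, add_zero]

lemma densityOne_inter {M M' : Set (ℕ → Bool)} (hM : NullMeasurableSet M μ)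
    (hM' : NullMeasurableSet M' μ) {β : ℕ → Bool}
    (h : densityOne μ M β) (h' : densityOne μ M' β) : densityOne μ (M ∩ M') β := by
  rw [densityOne_iff_compl hμ hM] at h
  rw [densityOne_iff_compl hμ hM'] at h'
  rw [densityOne_iff_compl hμ (hM.inter hM')]
  have hsum := Tendsto.add h h'
  simp only [add_zero] at hsum
  refine tendsto_of_tendsto_of_tendsto_of_le_of_le tendsto_const_nhds hsum
    (fun l => zero_le) (fun l => ?_)
  rw [ENNReal.div_add_div_same]
  apply ENNReal.div_le_div_right
  calc μ (cyl (seg β l) \ (M ∩ M'))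
      ≤ μ ((cyl (seg β l) \ M) ∪ (cyl (seg β l) \ M')) := by
        apply measure_mono
        intro x hx
        by_cases hxM : x ∈ M
        · exact Or.inr ⟨hx.1, fun hxM' => hx.2 ⟨hxM, hxM'⟩⟩
        · exact Or.inl ⟨hx.1, hxM⟩
    _ ≤ _ := measure_union_le _ _

end Meas

section Core
variable {μ : Measure (ℕ → Bool)} (hμ : ∀ s : List Bool, μ (cyl s) = (1/2 : ℝ≥0∞) ^ s.length)
include hμ

lemma density_null_core {W : Set (ℕ → Bool)} (hW : MeasurableSet W) :
    μ {β | β ∈ W ∧ Tendsto (fun l : ℕ => μ (W ∩ cyl (seg β l)) / μ (cyl (seg β l)))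
      atTop (𝓝 0)} = 0 := by
  haveI : IsFiniteMeasure μ := ⟨by rw [measure_univ_one hμ]; exact ENNReal.one_lt_top⟩
  set Y := {β | β ∈ W ∧ Tendsto (fun l : ℕ => μ (W ∩ cyl (seg β l)) / μ (cyl (seg β l)))
      atTop (𝓝 0)} with hY
  have hYtop : μ Y ≠ ⊤ := measure_ne_top μ Y
  have key : ∀ ε : ℝ≥0∞, 0 < ε → μ Y ≤ 2⁻¹ * (μ Y + ε) := by
    intro ε hε
    obtain ⟨O, hYO, hOopen, hOμ⟩ :=
      Set.exists_isOpen_lt_of_lt Y (μ Y + ε) (ENNReal.lt_add_right hYtop hε.ne')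
    set F : Set (List Bool) := {s | cyl s ⊆ O ∧ μ (W ∩ cyl s) ≤ 2⁻¹ * μ (cyl s)} with hF
    set F' : Set (List Bool) := {s ∈ F | ∀ t ∈ F, t <+: s → t = s} with hF'
    have hF'F : F' ⊆ F := fun s hs => hs.1
    -- cover
    have cover : Y ⊆ ⋃ s ∈ F', cyl s := by
      rintro β ⟨hβW, hβt⟩
      obtain ⟨l₂, hl₂⟩ := exists_cyl_subset hOopen (hYO ⟨hβW, hβt⟩)
      have hev : ∀ᶠ l in atTop,
          μ (W ∩ cyl (seg β l)) / μ (cyl (seg β l)) < 2⁻¹ :=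
        hβt.eventually (gt_mem_nhds (ENNReal.inv_pos.2 ENNReal.ofNat_ne_top))
      obtain ⟨l₁, hl₁⟩ := eventually_atTop.1 hev
      set l := max l₁ l₂ with hl
      have hsF : seg β l ∈ F := by
        constructor
        · exact (cyl_mono (seg_prefix β (le_max_right _ _))).trans hl₂
        · have h := hl₁ l (le_max_left _ _)
          rw [ENNReal.div_lt_iff (Or.inl (measure_cyl_ne_zero hμ _))
            (Or.inl (measure_cyl_ne_top hμ _))] at h
          exact h.le
      obtain ⟨t, htF, hts, hmin⟩ := exists_minimal_prefix F _ hsF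
      have htF' : t ∈ F' := ⟨htF, fun u hu hut => hmin u hu hut⟩
      exact Set.mem_biUnion htF' (cyl_mono hts (mem_cyl_seg β l))
    -- disjointness
    have hdisj : F'.PairwiseDisjoint cyl := by
      intro s hs t ht hst
      have h1 : ¬ s <+: t := fun h => hst (ht.2 s hs.1 h)
      have h2 : ¬ t <+: s := fun h => hst (hs.2 t ht.1 h).symm
      exact cyl_disjoint h1 h2
    have hdisjW : F'.PairwiseDisjoint (fun s => W ∩ cyl s) := fun s hs t ht hst =>
      ((hdisj hs ht hst).mono Set.inter_subset_right Set.inter_subset_right)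
    have hcnt : F'.Countable := Set.to_countable F'
    calc μ Y ≤ μ (⋃ s ∈ F', W ∩ cyl s) := by
          apply measure_mono
          intro β hβ
          obtain ⟨s, hs, hβs⟩ := Set.mem_iUnion₂.1 (cover hβ)
          exact Set.mem_iUnion₂.2 ⟨s, hs, hβ.1, hβs⟩
      _ = ∑' s : F', μ (W ∩ cyl s) :=
          measure_biUnion hcnt hdisjW (fun s _ => hW.inter (cyl_measurable s))
      _ ≤ ∑' s : F', 2⁻¹ * μ (cyl s) := ENNReal.tsum_le_tsum (fun s => s.2.1.2)
      _ = 2⁻¹ * ∑' s : F', μ (cyl s) := ENNReal.tsum_mul_left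
      _ = 2⁻¹ * μ (⋃ s ∈ F', cyl s) := by
          rw [measure_biUnion hcnt hdisj (fun s _ => cyl_measurable s)]
      _ ≤ 2⁻¹ * μ O := by
          gcongr
          exact Set.iUnion₂_subset fun s hs => (hF'F hs).1
      _ ≤ 2⁻¹ * (μ Y + ε) := mul_le_mul_right hOμ.le _
  -- conclude
  have h2 : μ Y ≤ 2⁻¹ * μ Y := by
    refine ENNReal.le_of_forall_pos_le_add fun ε hε _ => ?_
    have := key (2 * ε) (ENNReal.mul_pos two_ne_zero (ENNReal.coe_ne_zero.2 hε.ne'))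
    calc μ Y ≤ 2⁻¹ * (μ Y + 2 * ε) := this
      _ = 2⁻¹ * μ Y + 2⁻¹ * (2 * ε) := by rw [mul_add]
      _ = 2⁻¹ * μ Y + ε := by
          rw [← mul_assoc, ENNReal.inv_mul_cancel two_ne_zero ENNReal.ofNat_ne_top, one_mul]
  by_contra h0
  have : μ Y / 2 < μ Y := ENNReal.half_lt_self h0 hYtop
  rw [ENNReal.div_eq_inv_mul] at this
  exact absurd (lt_of_le_of_lt h2 this) (lt_irrefl _)

end Core

section Wrap
variable {μ : Measure (ℕ → Bool)} (hμ : ∀ s : List Bool, μ (cyl s) = (1/2 : ℝ≥0∞) ^ s.length)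
include hμ

lemma density_null {V : Set (ℕ → Bool)} (hV : NullMeasurableSet V μ) :
    μ {β | β ∉ V ∧ densityOne μ V β} = 0 := by
  obtain ⟨V', hV'sub, hV'meas, hV'ae⟩ := hV.exists_measurable_subset_ae_eq
  have hdiff : μ (V \ V') = 0 := (MeasureTheory.ae_eq_set.1 hV'ae).2
  have hcore := density_null_core hμ hV'meas.compl
  refine measure_mono_null ?_ hcore
  rintro β ⟨hβV, hβd⟩
  refine ⟨fun h => hβV (hV'sub h), ?_⟩
  rw [densityOne_iff_compl hμ hV] at hβd
  refine tendsto_of_tendsto_of_tendsto_of_le_of_le tendsto_const_nhds hβd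
    (fun l => zero_le) (fun l => ?_)
  apply ENNReal.div_le_div_right
  calc μ (V'ᶜ ∩ cyl (seg β l)) = μ (cyl (seg β l) \ V') := by
        rw [Set.inter_comm, ← Set.diff_eq]
    _ ≤ μ ((cyl (seg β l) \ V) ∪ (V \ V')) := measure_mono (fun x hx => by
        by_cases h : x ∈ V
        exacts [Or.inr ⟨h, hx.2⟩, Or.inl ⟨hx.1, h⟩])
    _ ≤ μ (cyl (seg β l) \ V) + μ (V \ V') := measure_union_le _ _
    _ = μ (cyl (seg β l) \ V) := by rw [hdiff, add_zero]

end Wrap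

section Union
variable {μ : Measure (ℕ → Bool)} (hμ : ∀ s : List Bool, μ (cyl s) = (1/2 : ℝ≥0∞) ^ s.length)
include hμ

lemma sUnion_mem_densFam {H : Set (Set (ℕ → Bool))} (hH : H ⊆ densFam μ) :
    ⋃₀ H ∈ densFam μ := by
  haveI : IsFiniteMeasure μ := ⟨by rw [measure_univ_one hμ]; exact ENNReal.one_lt_top⟩
  set A := (fun S : Set (Set (ℕ → Bool)) => μ (⋃₀ S)) '' {S | S ⊆ H ∧ S.Countable} with hA
  have hAne : A.Nonempty := ⟨μ (⋃₀ ∅), ⟨∅, ⟨Set.empty_subset _, Set.countable_empty⟩, rfl⟩⟩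
  obtain ⟨u, _, hu_tend, hu_mem⟩ := exists_seq_tendsto_sSup hAne (OrderTop.bddAbove A)
  choose T hT hT2 using fun n => hu_mem n
  set S' := ⋃ n, T n with hS'
  have hS'H : S' ⊆ H := Set.iUnion_subset fun n => (hT n).1
  have hS'c : S'.Countable := Set.countable_iUnion fun n => (hT n).2
  set V := ⋃₀ S' with hV
  have hVmeas : NullMeasurableSet V μ :=
    NullMeasurableSet.sUnion hS'c (fun t ht => (hH (hS'H ht)).1)
  have hle : μ V ≤ sSup A := le_csSup (OrderTop.bddAbove A) ⟨S', ⟨hS'H, hS'c⟩, rfl⟩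
  have hge : sSup A ≤ μ V := by
    refine le_of_tendsto hu_tend (Eventually.of_forall fun n => ?_)
    rw [← hT2 n]
    exact measure_mono (Set.sUnion_mono (Set.subset_iUnion T n))
  have hMV : ∀ M ∈ H, μ (M \ V) = 0 := by
    intro M hM
    have hmem : μ (⋃₀ (insert M S')) ∈ A :=
      ⟨insert M S', ⟨Set.insert_subset hM hS'H, hS'c.insert M⟩, rfl⟩
    rw [Set.sUnion_insert] at hmem
    have hunion : μ (V ∪ M) ≤ μ V := by
      rw [Set.union_comm]
      exact (le_csSup (OrderTop.bddAbove A) hmem).trans hge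
    have hsplit : μ (V ∪ M) = μ V + μ (M \ V) := by
      rw [← Set.union_diff_self]
      exact measure_union₀' hVmeas (Set.disjoint_sdiff_right.aedisjoint)
    rw [hsplit] at hunion
    have h0 : μ V + μ (M \ V) ≤ μ V + 0 := by rw [add_zero]; exact hunion
    exact le_zero_iff.1 (ENNReal.le_of_add_le_add_left (measure_ne_top μ V) h0)
  have hUV : μ (⋃₀ H \ V) = 0 := by
    refine measure_mono_null ?_ (density_null hμ hVmeas)
    rintro β ⟨hβU, hβV⟩
    obtain ⟨M, hMH, hβM⟩ := hβU
    exact ⟨hβV, densityOne_mono hμ (hH hMH).1 hVmeas (hMV M hMH) ((hH hMH).2 β hβM)⟩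
  have hVU : V ⊆ ⋃₀ H := Set.sUnion_mono hS'H
  have hUmeas : NullMeasurableSet (⋃₀ H) μ := by
    have he : ⋃₀ H = V ∪ (⋃₀ H \ V) := (Set.union_diff_cancel hVU).symm
    rw [he]
    exact hVmeas.union (NullMeasurableSet.of_null hUV)
  refine ⟨hUmeas, ?_⟩
  rintro β ⟨M, hMH, hβM⟩
  refine densityOne_mono hμ (hH hMH).1 hUmeas ?_ ((hH hMH).2 β hβM)
  rw [Set.diff_eq_empty.2 (Set.subset_sUnion_of_mem hMH)]
  exact measure_empty

end Union


/-- the family `𝓕` of λ-measurable sets with density 1 at each of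
their points is closed under finite intersections; any union of a subfamily is
λ-measurable and again in `𝓕`; consequently `𝓕` is a topology (the density
topology), all of whose open sets are λ-measurable. -/
theorem density_topology
    (μ : Measure (ℕ → Bool))
    (hμ : ∀ s : List Bool, μ (cyl s) = (1/2 : ℝ≥0∞) ^ s.length) :
    (∀ M ∈ densFam μ, ∀ M' ∈ densFam μ, M ∩ M' ∈ densFam μ) ∧
    (∀ H ⊆ densFam μ, ⋃₀ H ∈ densFam μ) ∧
    ∃ T : TopologicalSpace (ℕ → Bool),
      ∀ s : Set (ℕ → Bool), T.IsOpen s ↔ s ∈ densFam μ := by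
  have hint : ∀ M ∈ densFam μ, ∀ M' ∈ densFam μ, M ∩ M' ∈ densFam μ := by
    intro M hM M' hM'
    exact ⟨hM.1.inter hM'.1,
      fun β hβ => densityOne_inter hμ hM.1 hM'.1 (hM.2 β hβ.1) (hM'.2 β hβ.2)⟩
  have huniv : Set.univ ∈ densFam μ := by
    refine ⟨MeasurableSet.univ.nullMeasurableSet, fun β _ => ?_⟩
    have he : (fun l : ℕ => μ (Set.univ ∩ cyl (seg β l)) / μ (cyl (seg β l)))
        = fun _ => 1 := by
      funext l
      rw [Set.univ_inter, ENNReal.div_self (measure_cyl_ne_zero hμ _) (measure_cyl_ne_top hμ _)]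
    show Tendsto _ atTop (𝓝 1)
    rw [he]
    exact tendsto_const_nhds
  exact ⟨hint, fun H hH => sUnion_mem_densFam hμ hH,
    ⟨⟨fun s => s ∈ densFam μ, huniv, fun s t hs ht => hint s hs t ht,
      fun S hS => sUnion_mem_densFam hμ hS⟩, fun s => Iff.rfl⟩⟩
end

section
/- The set 𝓟 := {f ∈ 𝓜 : osc(f,β) = 0 for every β ∈ 2^ω} of everywhere converging martingales is Π¹₁-complete: 𝓟 is a coanalytic subset of the compact space 𝓜 ⊆ [0,1]^{2^{<ω}}, and for every coanalytic subset A of 2^ω there is a continuous map g : 2^ω → 𝓜 with A = g⁻¹(𝓟). -/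
open MeasureTheory Filter Topology
open scoped ENNReal

/-- The compact space `𝓜` of martingales, as a subspace of `[0,1]^{2^{<ω}}`. -/
abbrev Mart := {f : List Bool → ℝ // IsMartingale f}

/-- The set `𝓟` of everywhere converging martingales. -/
def Pconv : Set Mart := {f | ∀ β : ℕ → Bool, osc f.1 β = 0}

/-! ## Auxiliary lemmas -/

section oscLemmas

variable {f : List Bool → ℝ} {β : ℕ → Bool}

noncomputable def oscS (f : List Bool → ℝ) (β : ℕ → Bool) (N : ℕ) : ℝ :=
  ⨆ p : {n : ℕ // N ≤ n}, ⨆ q : {n : ℕ // N ≤ n}, |f (seg β p.1) - f (seg β q.1)|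

lemma osc_eq : osc f β = ⨅ N : ℕ, oscS f β N := rfl

lemma abs_sub_le_one_of_Icc (hf : ∀ s, f s ∈ Set.Icc (0:ℝ) 1) (s t : List Bool) :
    |f s - f t| ≤ 1 := by
  have h1 := hf s; have h2 := hf t
  rw [abs_sub_le_iff]
  exact ⟨by linarith [h1.1, h1.2, h2.1, h2.2], by linarith [h1.1, h1.2, h2.1, h2.2]⟩

variable (hf : ∀ s, f s ∈ Set.Icc (0:ℝ) 1)
include hf

instance (N : ℕ) : Nonempty {n : ℕ // N ≤ n} := ⟨⟨N, le_refl N⟩⟩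

lemma le_oscS {N : ℕ} (p q : {n : ℕ // N ≤ n}) :
    |f (seg β p.1) - f (seg β q.1)| ≤ oscS f β N := by
  have hb : ∀ p : {n : ℕ // N ≤ n},
      BddAbove (Set.range fun q : {n : ℕ // N ≤ n} => |f (seg β p.1) - f (seg β q.1)|) := by
    intro p
    exact ⟨1, by rintro x ⟨q, rfl⟩; exact abs_sub_le_one_of_Icc hf _ _⟩
  refine le_trans (le_ciSup (hb p) q) ?_
  apply le_ciSup (f := fun p : {n : ℕ // N ≤ n} =>
    ⨆ q : {n : ℕ // N ≤ n}, |f (seg β p.1) - f (seg β q.1)|)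
  refine ⟨1, ?_⟩
  rintro x ⟨p', rfl⟩
  exact ciSup_le fun q' => abs_sub_le_one_of_Icc hf _ _

lemma oscS_le {N : ℕ} {c : ℝ}
    (h : ∀ p q : ℕ, N ≤ p → N ≤ q → |f (seg β p) - f (seg β q)| ≤ c) :
    oscS f β N ≤ c :=
  ciSup_le fun p => ciSup_le fun q => h p.1 q.1 p.2 q.2

lemma oscS_nonneg (N : ℕ) : 0 ≤ oscS f β N := by
  have := le_oscS (β := β) hf (N := N) ⟨N, le_refl N⟩ ⟨N, le_refl N⟩
  exact le_trans (abs_nonneg _) this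

lemma osc_le_oscS (N : ℕ) : osc f β ≤ oscS f β N := by
  rw [osc_eq]
  exact ciInf_le ⟨0, by rintro x ⟨M, rfl⟩; exact oscS_nonneg hf M⟩ N

lemma le_osc {c : ℝ} (h : ∀ N, c ≤ oscS f β N) : c ≤ osc f β := le_ciInf h

lemma osc_nonneg : 0 ≤ osc f β := le_osc hf fun N => oscS_nonneg hf N

lemma osc_eq_zero_of_eventually_const {N : ℕ}
    (h : ∀ m, N ≤ m → f (seg β m) = f (seg β N)) : osc f β = 0 := by
  refine le_antisymm (le_trans (osc_le_oscS hf N) (oscS_le hf ?_)) (osc_nonneg hf)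
  intro p q hp hq
  rw [h p hp, h q hq, sub_self, abs_zero]

lemma osc_pos_iff :
    0 < osc f β ↔ ∃ k : ℕ, ∀ N : ℕ, ∃ p, N ≤ p ∧ ∃ q, N ≤ q ∧
      1 / (k + 1 : ℝ) ≤ |f (seg β p) - f (seg β q)| := by
  constructor
  · intro h
    obtain ⟨k, hk⟩ := exists_nat_one_div_lt h
    refine ⟨k, fun N => ?_⟩
    have h1 : (1 : ℝ) / (k + 1) < oscS f β N := lt_of_lt_of_le hk (osc_le_oscS hf N)
    obtain ⟨p, hp⟩ := exists_lt_of_lt_ciSup h1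
    obtain ⟨q, hq⟩ := exists_lt_of_lt_ciSup hp
    exact ⟨p.1, p.2, q.1, q.2, le_of_lt hq⟩
  · rintro ⟨k, hk⟩
    have hpos : (0:ℝ) < 1 / (k + 1) := by positivity
    refine lt_of_lt_of_le hpos (le_osc hf fun N => ?_)
    obtain ⟨p, hp, q, hq, hle⟩ := hk N
    exact le_trans hle (le_oscS hf ⟨p, hp⟩ ⟨q, hq⟩)

end oscLemmas


/-! ### The reduction machine -/

section Machine

variable (F : (ℕ → ℕ) → (ℕ → Bool))

/-- `u` is a live node for `β`: some `x ⊒ u` has `F x ⊒ β↾|u|`. -/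
def Alive (β : ℕ → Bool) (u : List ℕ) : Prop :=
  ∃ x : ℕ → ℕ, (∀ i : Fin u.length, x i = u.get i) ∧ ∀ i < u.length, F x i = β i

lemma alive_nil (β : ℕ → Bool) : Alive F β [] :=
  ⟨fun _ => 0, fun i => i.elim0, fun i hi => absurd hi (by simp)⟩

lemma alive_congr {β β' : ℕ → Bool} {u : List ℕ} (h : ∀ i < u.length, β i = β' i) :
    Alive F β u ↔ Alive F β' u := by
  constructor <;> rintro ⟨x, hx1, hx2⟩ <;> refine ⟨x, hx1, fun i hi => ?_⟩
  · rw [hx2 i hi, h i hi]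
  · rw [hx2 i hi, h i hi]

/-- Machine states. -/
inductive MSt where
  | spine (u : List ℕ) (a : ℕ)
  | gate (u : List ℕ) (a : ℕ)
  | frozen (c : ℝ)

/-- Target values, alternating `1/3`, `2/3`. -/
noncomputable def tval (k : ℕ) : ℝ := if Even k then 1/3 else 2/3

lemma tval_mem (k : ℕ) : tval k ∈ Set.Icc (0:ℝ) 1 := by
  unfold tval; split <;> norm_num

/-- Value attached to a state. -/
noncomputable def mval : MSt → ℝ
  | .spine u _ => tval u.length
  | .gate u _ => tval u.length
  | .frozen c => c

open Classical in
/-- One step of the machine. -/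
noncomputable def mstep (β : ℕ → Bool) : MSt → Bool → MSt
  | .spine u a, false => .spine u (a+1)
  | .spine u a, true => .gate u a
  | .gate u a, false =>
      if Alive F β (u ++ [a]) then .spine (u ++ [a]) 0 else .frozen (tval (u.length + 1))
  | .gate u _, true => .frozen (2 * tval u.length - tval (u.length + 1))
  | .frozen c, _ => .frozen c

/-- Run the machine on a word. -/
noncomputable def mrun (β : ℕ → Bool) : MSt → List Bool → MSt
  | st, [] => st
  | st, b :: rest => mrun β (mstep F β st b) rest

lemma mrun_nil (β : ℕ → Bool) (st : MSt) : mrun F β st [] = st := rfl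

lemma mrun_cons (β : ℕ → Bool) (st : MSt) (b : Bool) (rest : List Bool) :
    mrun F β st (b :: rest) = mrun F β (mstep F β st b) rest := rfl

lemma mrun_append (β : ℕ → Bool) (st : MSt) (s t : List Bool) :
    mrun F β st (s ++ t) = mrun F β (mrun F β st s) t := by
  induction s generalizing st with
  | nil => simp [mrun_nil]
  | cons b rest ih => rw [List.cons_append, mrun_cons, mrun_cons, ih]

/-- The martingale associated to `β`. -/
noncomputable def mf (β : ℕ → Bool) (s : List Bool) : ℝ :=
  mval (mrun F β (.spine [] 0) s)

lemma two_tval_sub (k : ℕ) : 2 * tval k - tval (k+1) ∈ Set.Icc (0:ℝ) 1 := by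
  unfold tval
  rcases Nat.even_or_odd k with h | h
  · rw [if_pos h, if_neg (by simp [Nat.even_add_one, h])]
    norm_num
  · rw [if_neg (by simpa using h), if_pos (by simp [Nat.even_add_one, Nat.not_even_iff_odd.mpr h])]
    norm_num

lemma mval_step_avg (β : ℕ → Bool) (st : MSt) :
    mval st = (mval (mstep F β st false) + mval (mstep F β st true)) / 2 := by
  cases st with
  | spine u a => simp [mstep, mval]
  | gate u a =>
      by_cases h : Alive F β (u ++ [a]) <;>
        · simp only [mstep, h, if_true, if_false, mval, List.length_append, List.length_cons,
            List.length_nil]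
          ring
  | frozen c => simp [mstep, mval]

/-- Invariant: value lies in `[0,1]`. -/
def mgood : MSt → Prop
  | .frozen c => c ∈ Set.Icc (0:ℝ) 1
  | _ => True

lemma mgood_val {st : MSt} (h : mgood st) : mval st ∈ Set.Icc (0:ℝ) 1 := by
  cases st with
  | spine u a => exact tval_mem _
  | gate u a => exact tval_mem _
  | frozen c => exact h

lemma mgood_step (β : ℕ → Bool) {st : MSt} (h : mgood st) (b : Bool) :
    mgood (mstep F β st b) := by
  cases st with
  | spine u a => cases b <;> trivial
  | gate u a =>
      cases b with
      | false =>
          simp only [mstep]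
          split
          · trivial
          · exact tval_mem _
      | true => exact two_tval_sub _
  | frozen c => cases b <;> exact h

lemma mgood_mrun (β : ℕ → Bool) {st : MSt} (h : mgood st) (s : List Bool) :
    mgood (mrun F β st s) := by
  induction s generalizing st with
  | nil => exact h
  | cons b rest ih => exact ih (mgood_step F β h b)

lemma mf_martingale (β : ℕ → Bool) : IsMartingale (mf F β) := by
  constructor
  · intro s
    exact mgood_val (mgood_mrun F β (st := .spine [] 0) trivial s)
  · intro s
    rw [mf, mf, mf, mrun_append, mrun_append]
    exact mval_step_avg F β _

/-! ### Locality / continuity -/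

/-- Bound on the length of `Alive` queries from a state. -/
def qb : MSt → ℕ
  | .spine u _ => u.length + 1
  | .gate u _ => u.length + 1
  | .frozen _ => 0

lemma mstep_congr {β β' : ℕ → Bool} (st : MSt) (b : Bool)
    (h : ∀ i < qb st, β i = β' i) : mstep F β st b = mstep F β' st b := by
  cases st with
  | spine u a => cases b <;> rfl
  | gate u a =>
      cases b with
      | false =>
          simp only [mstep]
          rw [alive_congr F (β' := β') (by simpa [qb, List.length_append] using h)]
      | true => rfl
  | frozen c => cases b <;> rfl

lemma qb_step (β : ℕ → Bool) (st : MSt) (b : Bool) : qb (mstep F β st b) ≤ qb st + 1 := by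
  cases st with
  | spine u a => cases b <;> simp [mstep, qb]
  | gate u a =>
      cases b with
      | false =>
          simp only [mstep]
          split <;> simp [qb, List.length_append]
      | true => simp [mstep, qb]
  | frozen c => cases b <;> simp [mstep, qb]

lemma mrun_congr {β β' : ℕ → Bool} (st : MSt) (s : List Bool)
    (h : ∀ i < qb st + s.length, β i = β' i) : mrun F β st s = mrun F β' st s := by
  induction s generalizing st with
  | nil => rfl
  | cons b rest ih =>
      rw [mrun_cons, mrun_cons, mstep_congr F st b (fun i hi => h i (by simp; omega)),
        ih]
      intro i hi
      refine h i ?_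
      have := qb_step F β' st b
      simp at hi ⊢
      omega

lemma mf_congr {β β' : ℕ → Bool} (s : List Bool)
    (h : ∀ i < s.length + 1, β i = β' i) : mf F β s = mf F β' s := by
  rw [mf, mf, mrun_congr F _ s (by simpa [qb, Nat.add_comm] using h)]

lemma mf_continuous (s : List Bool) : Continuous fun β => mf F β s := by
  set m := s.length + 1 with hm
  have : (fun β => mf F β s) =
      (fun v : Fin m → Bool => mf F (fun i => if h : i < m then v ⟨i, h⟩ else false) s) ∘
      (fun β (i : Fin m) => β i) := by
    funext β
    refine mf_congr F s fun i hi => ?_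
    rw [dif_pos (by omega)]
  rw [this]
  exact (continuous_of_discreteTopology).comp (continuous_pi fun i => continuous_apply i.1)

end Machine


/-! ### Prefix helpers -/

lemma ofFn_snoc {α : Type*} (g : ℕ → α) (n : ℕ) :
    (List.ofFn fun i : Fin (n+1) => g i) = (List.ofFn fun i : Fin n => g i) ++ [g n] := by
  rw [List.ofFn_succ']
  simp [List.concat_eq_append]

lemma prefix_getElem {α : Type*} {l₁ l₂ : List α} (h : l₁ <+: l₂) {n : ℕ}
    (hn : n < l₁.length) : l₂[n]'(lt_of_lt_of_le hn h.length_le) = l₁[n] :=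
  (h.getElem hn).symm

section Analysis

variable (F : (ℕ → ℕ) → (ℕ → Bool)) (β : ℕ → Bool)

def useg (x : ℕ → ℕ) (k : ℕ) : List ℕ := List.ofFn fun i : Fin k => x i

lemma useg_snoc (x : ℕ → ℕ) (k : ℕ) : useg x (k+1) = useg x k ++ [x k] := ofFn_snoc x k

lemma seg_snoc (γ : ℕ → Bool) (n : ℕ) : seg γ (n+1) = seg γ n ++ [γ n] := ofFn_snoc γ n

/-- `T(β)` has an infinite branch. -/
def HasBranch : Prop := ∃ x : ℕ → ℕ, ∀ k, Alive F β (useg x k)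

lemma alive_useg (x : ℕ → ℕ) (k : ℕ) :
    Alive F β (useg x k) ↔ ∃ y, (∀ i < k, y i = x i) ∧ ∀ i < k, F y i = β i := by
  constructor
  · rintro ⟨y, h1, h2⟩
    refine ⟨y, fun i hi => ?_, fun i hi => h2 i (by simpa [useg] using hi)⟩
    have := h1 ⟨i, by simpa [useg] using hi⟩
    simpa [useg, List.get_ofFn] using this
  · rintro ⟨y, h1, h2⟩
    refine ⟨y, fun i => ?_, fun i hi => h2 i (by simpa [useg] using hi)⟩
    have hi : (i : ℕ) < k := by have := i.2; simpa [useg] using this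
    rw [List.get_eq_getElem]; simp [useg, h1 _ hi]

def uof : MSt → List ℕ
  | .spine u _ => u
  | .gate u _ => u
  | .frozen _ => []

def isFrozen : MSt → Prop
  | .frozen _ => True
  | _ => False

lemma mval_not_frozen {st : MSt} (h : ¬ isFrozen st) : mval st = tval (uof st).length := by
  cases st with
  | spine u a => rfl
  | gate u a => rfl
  | frozen c => exact absurd trivial h

lemma step_not_frozen {st : MSt} {b : Bool} (h2 : ¬ isFrozen (mstep F β st b)) :
    uof (mstep F β st b) = uof st ∨
      ∃ a, uof (mstep F β st b) = uof st ++ [a] ∧ Alive F β (uof st ++ [a]) := by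
  cases st with
  | spine u a => cases b <;> exact Or.inl rfl
  | gate u a =>
      cases b with
      | false =>
          by_cases hA : Alive F β (u ++ [a])
          · exact Or.inr ⟨a, by simp [mstep, hA, uof], hA⟩
          · exact absurd (by simp [mstep, hA, isFrozen]) h2
      | true => exact absurd (by simp [mstep, isFrozen]) h2
  | frozen c => cases b <;> exact absurd (by simp [mstep, isFrozen]) h2

lemma not_frozen_of_step {st : MSt} {b : Bool} (h2 : ¬ isFrozen (mstep F β st b)) :
    ¬ isFrozen st := by
  cases st with
  | spine u a => simp [isFrozen]
  | gate u a => simp [isFrozen]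
  | frozen c => exact fun _ => h2 (by cases b <;> simp [mstep, isFrozen])

/-- The state after reading `γ↾n`. -/
noncomputable def stt (γ : ℕ → Bool) (n : ℕ) : MSt := mrun F β (.spine [] 0) (seg γ n)

lemma stt_zero (γ : ℕ → Bool) : stt F β γ 0 = .spine [] 0 := rfl

lemma stt_succ (γ : ℕ → Bool) (n : ℕ) :
    stt F β γ (n+1) = mstep F β (stt F β γ n) (γ n) := by
  rw [stt, seg_snoc, mrun_append]
  rfl

lemma mf_seg (γ : ℕ → Bool) (n : ℕ) : mf F β (seg γ n) = mval (stt F β γ n) := rfl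

theorem eventually_const_of_no_branch (hnb : ¬ HasBranch F β) (γ : ℕ → Bool) :
    ∃ N, ∀ m, N ≤ m → mf F β (seg γ m) = mf F β (seg γ N) := by
  by_cases hfr : ∃ n c, stt F β γ n = .frozen c
  · obtain ⟨n, c, hn⟩ := hfr
    have key : ∀ d, stt F β γ (n + d) = .frozen c := by
      intro d
      induction d with
      | zero => exact hn
      | succ d ih =>
          rw [← Nat.add_assoc, stt_succ, ih]
          cases γ (n + d) <;> rfl
    refine ⟨n, fun m hm => ?_⟩
    obtain ⟨d, rfl⟩ := Nat.exists_eq_add_of_le hm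
    rw [mf_seg, mf_seg, key d]
    have := key 0
    rw [Nat.add_zero] at this
    rw [this]
  · push_neg at hfr
    have hnfr : ∀ n, ¬ isFrozen (stt F β γ n) := by
      intro n h
      cases hst : stt F β γ n with
      | spine u a => rw [hst] at h; exact h
      | gate u a => rw [hst] at h; exact h
      | frozen c => exact hfr n c hst
    set uu : ℕ → List ℕ := fun n => uof (stt F β γ n) with huu
    have hstep : ∀ n, uu (n+1) = uu n ∨
        ∃ a, uu (n+1) = uu n ++ [a] ∧ Alive F β (uu n ++ [a]) := by
      intro n
      have := step_not_frozen F β (st := stt F β γ n) (b := γ n)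
        (by rw [← stt_succ]; exact hnfr (n+1))
      rw [huu]; simpa [← stt_succ] using this
    have halive : ∀ n, Alive F β (uu n) := by
      intro n
      induction n with
      | zero => exact alive_nil F β
      | succ n ih =>
          rcases hstep n with h | ⟨a, h, hA⟩
          · rw [h]; exact ih
          · rw [h]; exact hA
    have hchain : ∀ n m, n ≤ m → uu n <+: uu m := by
      intro n m hnm
      induction m, hnm using Nat.le_induction with
      | base => exact List.prefix_refl _
      | succ m hm ih =>
          rcases hstep m with h | ⟨a, h, _⟩
          · rw [h]; exact ih
          · rw [h]; exact ih.trans (List.prefix_append _ _)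
    -- eventually constant `uu`
    have hec : ∃ N, ∀ m, N ≤ m → uu m = uu N := by
      by_contra hcon
      push_neg at hcon
      -- extract arbitrarily long `uu`s
      have hgrow : ∀ j, ∃ n, j ≤ (uu n).length := by
        intro j
        induction j with
        | zero => exact ⟨0, Nat.zero_le _⟩
        | succ j ih =>
            obtain ⟨n, hn⟩ := ih
            obtain ⟨m, hm, hne⟩ := hcon n
            have hpre := hchain n m hm
            have hlt : (uu n).length < (uu m).length := by
              rcases lt_or_eq_of_le hpre.length_le with h | h
              · exact h
              · exact absurd (hpre.eq_of_length h).symm hne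
            exact ⟨m, by omega⟩
      -- discrete IVT: all lengths are attained
      have hivt : ∀ m k, k ≤ (uu m).length → ∃ n, (uu n).length = k := by
        intro m
        induction m with
        | zero =>
            intro k hk
            have : uu 0 = [] := by rw [huu]; simp [stt_zero, uof]
            rw [this] at hk
            simp at hk
            exact ⟨0, by simp [this, hk]⟩
        | succ m ih =>
            intro k hk
            by_cases h : k ≤ (uu m).length
            · exact ih k h
            · have hl1 : (uu (m+1)).length ≤ (uu m).length + 1 := by
                rcases hstep m with hh | ⟨a, hh, _⟩
                · rw [hh]; omega
                · rw [hh]; simp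
              exact ⟨m+1, by omega⟩
      have hex : ∀ k, ∃ n, (uu n).length = k := by
        intro k
        obtain ⟨n, hn⟩ := hgrow k
        exact hivt n k hn
      set v : ℕ → List ℕ := fun k => uu (hex k).choose with hv
      have hvlen : ∀ k, (v k).length = k := fun k => (hex k).choose_spec
      have hvchain : ∀ j k, j ≤ k → v j <+: v k := by
        intro j k hjk
        rcases le_total ((hex j).choose) ((hex k).choose) with h | h
        · exact hchain _ _ h
        · have h2 := hchain _ _ h
          have : k ≤ j := by
            have := h2.length_le
            rwa [hvlen, hvlen] at this
          have hjk' : j = k := le_antisymm hjk this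
          subst hjk'
          exact List.prefix_refl _
      set x : ℕ → ℕ := fun i => (v (i+1)).getD i 0 with hx
      have husx : ∀ k, useg x k = v k := by
        intro k
        apply List.ext_getElem (by simp [useg, hvlen])
        intro n h1 h2
        have hn : n < k := by simpa [useg] using h1
        have hnv : n < (v (n+1)).length := by rw [hvlen]; omega
        have hg : x n = (v (n+1))[n] := by
          rw [hx]; exact List.getD_eq_getElem _ _ hnv
        have hpp := prefix_getElem (hvchain (n+1) k hn) hnv
        simp only [useg, List.getElem_ofFn]
        rw [hg, ← hpp]
      exact hnb ⟨x, fun k => by rw [husx k, hv]; exact halive _⟩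
    obtain ⟨N, hN⟩ := hec
    refine ⟨N, fun m hm => ?_⟩
    rw [mf_seg, mf_seg, mval_not_frozen (hnfr m), mval_not_frozen (hnfr N)]
    have : uu m = uu N := hN m hm
    rw [huu] at this
    simp only at this
    rw [this]

theorem osc_pos_of_branch (hb : HasBranch F β) :
    ∃ γ : ℕ → Bool, 0 < osc (mf F β) γ := by
  obtain ⟨x, hx⟩ := hb
  set L : ℕ → List Bool :=
    fun k => Nat.rec [] (fun k Lk => Lk ++ (List.replicate (x k) false ++ [true, false])) k
    with hLdef
  have hLs : ∀ k, L (k+1) = L k ++ (List.replicate (x k) false ++ [true, false]) :=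
    fun k => rfl
  have mrun_replicate : ∀ (j : ℕ) (u : List ℕ) (a : ℕ),
      mrun F β (.spine u a) (List.replicate j false) = .spine u (a + j) := by
    intro j
    induction j with
    | zero => intro u a; simp [mrun_nil]
    | succ j ih =>
        intro u a
        rw [List.replicate_succ, mrun_cons]
        show mrun F β (.spine u (a+1)) _ = _
        rw [ih u (a+1)]
        congr 1
        omega
  have hrun : ∀ k, mrun F β (.spine [] 0) (L k) = .spine (useg x k) 0 := by
    intro k
    induction k with
    | zero =>
        have hL0 : L 0 = [] := rfl
        rw [hL0, mrun_nil]
        simp [useg]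
    | succ k ih =>
        rw [hLs, mrun_append, ih, mrun_append, mrun_replicate, mrun_cons, mrun_cons]
        show mrun F β (mstep F β (.gate (useg x k) (0 + x k)) false) [] = _
        have hA : Alive F β (useg x k ++ [0 + x k]) := by
          rw [Nat.zero_add, ← useg_snoc]
          exact hx (k+1)
        simp only [mstep, if_pos hA, mrun_nil]
        rw [Nat.zero_add, ← useg_snoc]
  have hlen : ∀ k, 2 * k ≤ (L k).length := by
    intro k
    induction k with
    | zero => simp
    | succ k ih =>
        rw [hLs]
        simp only [List.length_append, List.length_replicate, List.length_cons,
          List.length_nil]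
        omega
  have hpre : ∀ k m, k ≤ m → L k <+: L m := by
    intro k m hkm
    induction m, hkm using Nat.le_induction with
    | base => exact List.prefix_refl _
    | succ m hm ih =>
        rw [hLs]
        exact ih.trans (List.prefix_append _ _)
  set γ : ℕ → Bool := fun n => (L (n+1)).getD n false with hγ
  have hseg : ∀ k, seg γ (L k).length = L k := by
    intro k
    apply List.ext_getElem (by simp [seg])
    intro n h1 h2
    have hn1 : n < (L (n+1)).length := lt_of_lt_of_le (by omega) (hlen (n+1))
    simp only [seg, List.getElem_ofFn]
    rw [hγ]
    simp only
    rw [List.getD_eq_getElem _ _ hn1]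
    rcases le_total (n+1) k with h | h
    · exact (prefix_getElem (hpre _ _ h) hn1).symm
    · exact prefix_getElem (hpre _ _ h) h2
  have hval : ∀ k, mf F β (seg γ (L k).length) = tval k := by
    intro k
    rw [hseg, mf, hrun]
    simp [mval, useg]
  refine ⟨γ, (osc_pos_iff (mf_martingale F β).1).mpr ⟨2, fun N => ?_⟩⟩
  refine ⟨(L (2*N)).length, le_trans (by omega) (hlen (2*N)),
    (L (2*N+1)).length, le_trans (by omega) (hlen (2*N+1)), ?_⟩
  rw [hval (2*N), hval (2*N+1)]
  have h1 : tval (2*N) = 1/3 := by rw [tval, if_pos (even_two_mul N)]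
  have h2 : tval (2*N+1) = 2/3 := by
    rw [tval, if_neg]
    simp [Nat.even_add_one, even_two_mul N]
  rw [h1, h2, abs_sub_comm, show (2:ℝ)/3 - 1/3 = 1/3 by norm_num,
    abs_of_nonneg (by norm_num : (0:ℝ) ≤ 1/3)]
  norm_num

theorem branch_iff_mem_range (hF : Continuous F) :
    HasBranch F β ↔ β ∈ Set.range F := by
  constructor
  · rintro ⟨x, hx⟩
    refine ⟨x, funext fun m => ?_⟩
    have hopen : IsOpen (F ⁻¹' {β' : ℕ → Bool | β' m = F x m}) := by
      have h1 : {β' : ℕ → Bool | β' m = F x m} =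
          (fun β' : ℕ → Bool => β' m) ⁻¹' {F x m} := rfl
      exact hF.isOpen_preimage _ (h1 ▸ (continuous_apply m).isOpen_preimage _
        (isOpen_discrete _))
    obtain ⟨I, u, hIu, hsub⟩ := isOpen_pi_iff.mp hopen x (by simp)
    set n := max (I.sup id + 1) (m + 1) with hn
    have hA := (alive_useg F β x n).mp (hx n)
    obtain ⟨y, hy1, hy2⟩ := hA
    have hyI : y ∈ (I : Set ℕ).pi u := by
      intro i hi
      have hi' : i < n :=
        lt_of_lt_of_le (Nat.lt_succ_of_le (Finset.le_sup (f := id) hi)) (le_max_left _ _)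
      rw [hy1 i hi']
      exact (hIu i hi).2
    have hFy : F y m = F x m := hsub hyI
    have hm : F y m = β m := hy2 m (lt_of_lt_of_le (Nat.lt_succ_self m) (le_max_right _ _))
    rw [← hFy, hm]
  · rintro ⟨x, rfl⟩
    exact ⟨x, fun k => ⟨x, fun i => by rw [List.get_eq_getElem]; simp [useg], fun i hi => rfl⟩⟩

end Analysis


/-! ### Part 1: `Pconv` is coanalytic -/

lemma isClosed_isMartingale : IsClosed {f : List Bool → ℝ | IsMartingale f} := by
  have : {f : List Bool → ℝ | IsMartingale f} =
      (⋂ s : List Bool, (fun f : List Bool → ℝ => f s) ⁻¹' Set.Icc (0:ℝ) 1) ∩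
      (⋂ s : List Bool, {f : List Bool → ℝ |
        f s = (f (s ++ [false]) + f (s ++ [true])) / 2}) := by
    ext f
    simp [IsMartingale, Set.mem_iInter]
  rw [this]
  refine IsClosed.inter (isClosed_iInter fun s => ?_) (isClosed_iInter fun s => ?_)
  · exact isClosed_Icc.preimage (continuous_apply s)
  · exact isClosed_eq (continuous_apply s)
      (((continuous_apply (s ++ [false])).add (continuous_apply (s ++ [true]))).div_const 2)

instance : PolishSpace Mart := isClosed_isMartingale.polishSpace

instance : BorelSpace Mart := Subtype.borelSpace {f : List Bool → ℝ | IsMartingale f}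

lemma seg_eq_iff {β : ℕ → Bool} {p : ℕ} {s : List Bool} :
    seg β p = s ↔ s.length = p ∧ ∀ i : Fin p, β i = s.getD i false := by
  constructor
  · rintro rfl
    refine ⟨by simp [seg], fun i => ?_⟩
    rw [List.getD_eq_getElem _ _ (by simp [seg, i.2])]
    simp [seg]
  · rintro ⟨hlen, h⟩
    apply List.ext_getElem (by simp [seg, hlen])
    intro n h1 h2
    have hn : n < p := by simpa [seg] using h1
    have := h ⟨n, hn⟩
    simp only [seg, List.getElem_ofFn]
    rw [this, List.getD_eq_getElem _ _ h2]

lemma measurable_seg_eq (p : ℕ) (s : List Bool) :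
    MeasurableSet {x : Mart × (ℕ → Bool) | seg x.2 p = s} := by
  by_cases hsl : s.length = p
  · have : {x : Mart × (ℕ → Bool) | seg x.2 p = s} =
        ⋂ i : Fin p, {x : Mart × (ℕ → Bool) | x.2 i = s.getD i false} := by
      ext x
      simp only [Set.mem_setOf_eq, Set.mem_iInter, seg_eq_iff]
      exact ⟨fun h i => h.2 i, fun h => ⟨hsl, h⟩⟩
    rw [this]
    exact MeasurableSet.iInter fun i =>
      ((measurable_pi_apply (i : ℕ)).comp measurable_snd) (measurableSet_singleton _)
  · have : {x : Mart × (ℕ → Bool) | seg x.2 p = s} = ∅ := by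
      ext x
      simp only [Set.mem_setOf_eq, Set.mem_empty_iff_false, iff_false, seg_eq_iff]
      exact fun h => hsl h.1
    rw [this]
    exact MeasurableSet.empty

lemma measurable_oscC (k p q : ℕ) :
    MeasurableSet {x : Mart × (ℕ → Bool) |
      1 / (k + 1 : ℝ) ≤ |x.1.1 (seg x.2 p) - x.1.1 (seg x.2 q)|} := by
  have hdec : {x : Mart × (ℕ → Bool) |
      1 / (k + 1 : ℝ) ≤ |x.1.1 (seg x.2 p) - x.1.1 (seg x.2 q)|} =
      ⋃ st : List Bool × List Bool,
        ({x : Mart × (ℕ → Bool) | seg x.2 p = st.1} ∩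
         {x : Mart × (ℕ → Bool) | seg x.2 q = st.2} ∩
         {x : Mart × (ℕ → Bool) | 1 / (k + 1 : ℝ) ≤ |x.1.1 st.1 - x.1.1 st.2|}) := by
    ext x
    simp only [Set.mem_setOf_eq, Set.mem_iUnion, Set.mem_inter_iff]
    constructor
    · intro h
      exact ⟨(seg x.2 p, seg x.2 q), ⟨rfl, rfl⟩, h⟩
    · rintro ⟨st, ⟨h1, h2⟩, h3⟩
      rw [h1, h2]
      exact h3
  rw [hdec]
  refine MeasurableSet.iUnion fun st => ((measurable_seg_eq p st.1).inter
    (measurable_seg_eq q st.2)).inter ?_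
  have hcont : Continuous fun x : Mart × (ℕ → Bool) => |x.1.1 st.1 - x.1.1 st.2| :=
    (((continuous_apply st.1).comp (continuous_subtype_val.comp continuous_fst)).sub
      ((continuous_apply st.2).comp (continuous_subtype_val.comp continuous_fst))).abs
  exact hcont.measurable measurableSet_Ici

theorem pconv_coanalytic : IsCoanalytic Pconv := by
  rw [IsCoanalytic]
  have himg : Pconvᶜ = Prod.fst '' {x : Mart × (ℕ → Bool) | 0 < osc x.1.1 x.2} := by
    ext f
    simp only [Set.mem_compl_iff, Pconv, Set.mem_setOf_eq, Set.mem_image, Prod.exists]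
    constructor
    · intro h
      push_neg at h
      obtain ⟨β, hβ⟩ := h
      exact ⟨f, β, lt_of_le_of_ne (osc_nonneg f.2.1) (Ne.symm hβ), rfl⟩
    · rintro ⟨f', β, hβ, rfl⟩
      push_neg
      exact ⟨β, ne_of_gt hβ⟩
  rw [himg]
  have hB : MeasurableSet {x : Mart × (ℕ → Bool) | 0 < osc x.1.1 x.2} := by
    have : {x : Mart × (ℕ → Bool) | 0 < osc x.1.1 x.2} =
        ⋃ k : ℕ, ⋂ N : ℕ, ⋃ p : ℕ, ⋃ (_ : N ≤ p), ⋃ q : ℕ, ⋃ (_ : N ≤ q),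
          {x : Mart × (ℕ → Bool) |
            1 / (k + 1 : ℝ) ≤ |x.1.1 (seg x.2 p) - x.1.1 (seg x.2 q)|} := by
      ext x
      simp only [Set.mem_setOf_eq, Set.mem_iUnion, Set.mem_iInter, exists_prop]
      exact osc_pos_iff x.1.2.1
    rw [this]
    exact MeasurableSet.iUnion fun k => MeasurableSet.iInter fun N =>
      MeasurableSet.iUnion fun p => MeasurableSet.iUnion fun _ =>
      MeasurableSet.iUnion fun q => MeasurableSet.iUnion fun _ => measurable_oscC k p q
  haveI : PolishSpace Bool := inferInstance
  exact hB.analyticSet.image_of_continuous continuous_fst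


theorem Pconv_coanalytic_complete :
    IsCoanalytic Pconv ∧
    ∀ A : Set (ℕ → Bool), IsCoanalytic A →
      ∃ g : (ℕ → Bool) → Mart, Continuous g ∧ A = g ⁻¹' Pconv := by
  refine ⟨pconv_coanalytic, fun A hA => ?_⟩
  rw [IsCoanalytic] at hA
  rw [MeasureTheory.AnalyticSet_def] at hA
  rcases hA with hA | ⟨F, hFc, hFr⟩
  · -- `Aᶜ = ∅` : use the constant martingale
    have hAu : A = Set.univ := Set.compl_empty_iff.mp hA
    have hcm : IsMartingale (fun _ : List Bool => (1:ℝ)/2) :=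
      ⟨fun _ => by norm_num, fun _ => by norm_num⟩
    refine ⟨fun _ => ⟨fun _ => (1:ℝ)/2, hcm⟩, continuous_const, ?_⟩
    rw [hAu]
    ext β
    simp only [Set.mem_univ, Set.mem_preimage, Pconv, Set.mem_setOf_eq, true_iff]
    intro γ
    exact osc_eq_zero_of_eventually_const hcm.1 (N := 0) (fun m _ => rfl)
  · refine ⟨fun β => ⟨mf F β, mf_martingale F β⟩,
      Continuous.subtype_mk (continuous_pi fun s => mf_continuous F s) _, ?_⟩
    ext β
    have hmem : β ∈ A ↔ ¬ HasBranch F β := by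
      rw [branch_iff_mem_range F β hFc, hFr]
      exact (not_not.symm : β ∈ A ↔ ¬ β ∈ Aᶜ).trans (by simp)
    simp only [Set.mem_preimage, Pconv, Set.mem_setOf_eq]
    constructor
    · intro h γ
      obtain ⟨N, hN⟩ := eventually_const_of_no_branch F β (hmem.mp h) γ
      exact osc_eq_zero_of_eventually_const (mf_martingale F β).1 hN
    · intro h
      rw [hmem]
      intro hb
      obtain ⟨γ, hγ⟩ := osc_pos_of_branch F β hb
      exact absurd (h γ) (ne_of_gt hγ)
end
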